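/- Let f(z) = zⁿ + a₁z^{n−1} + ⋯ + a_n = ∏(z − α_i) and g(z) = zⁿ + b₁z^{n−1} + ⋯ + b_n = ∏(z − β_i) be monic complex polynomials of degree n. Set Γ = max_{1≤k≤n} max(|a_k|^{1/k}, |b_k|^{1/k}) and γ = 2Γ. Then the roots can be enumerated so that max_i |α_i − β_i| ≤ 4·2^{−1/n} (∑_{k=1}^n |a_k − b_k| γ^{n−k})^{1/n}. -/

import Mathlib

open Polynomial Finset Metric Set Complex

-- Lemma A: max modulus
lemma circle_bound {ι : Type*} [Fintype ι] (c : ι → ℂ) :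
    ∃ w : ℂ, ‖w‖ = 1 ∧ 1 ≤ ∏ m, ‖w^2 + c m * w + 1‖ := by
  set P : Polynomial ℂ := ∏ m, (X^2 + C (c m) * X + 1) with hP
  have heval : ∀ w : ℂ, P.eval w = ∏ m, (w^2 + c m * w + 1) := by
    intro w; simp [hP, eval_prod]
  have hcont : Continuous fun w => ‖P.eval w‖ := (P.continuous_aeval).norm
  obtain ⟨w, hw, hmax⟩ := (isCompact_sphere (0:ℂ) 1).exists_isMaxOn
    (NormedSpace.sphere_nonempty.mpr zero_le_one) hcont.continuousOn
  have hwabs : ‖w‖ = 1 := by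
    simpa [Complex.dist_eq] using mem_sphere.mp hw
  have hmm : ‖P.eval 0‖ ≤ ‖P.eval w‖ := by
    apply Complex.norm_le_of_forall_mem_frontier_norm_le (U := Metric.ball (0:ℂ) 1)
      isBounded_ball (P.differentiable_aeval).diffContOnCl
    · intro z hz
      rw [frontier_ball (0:ℂ) one_ne_zero] at hz
      exact hmax hz
    · exact subset_closure (mem_ball_self one_pos)
  have h0 : P.eval 0 = 1 := by simp [heval]
  refine ⟨w, hwabs, ?_⟩
  have : ‖P.eval w‖ = ∏ m, ‖w^2 + c m * w + 1‖ := by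
    rw [heval]
    simpa using norm_prod Finset.univ (fun m => (w^2 + c m * w + 1))
  rw [← this]
  simpa [h0] using hmm

-- Lemma B
lemma interval_prod_bound {ι : Type*} [Fintype ι] (t : ι → ℝ) {L : ℝ} (hL : 0 ≤ L) :
    ∃ x ∈ Set.Icc (0:ℝ) L, (L/4)^(Fintype.card ι) ≤ ∏ m, |x - t m| := by
  rcases eq_or_lt_of_le hL with hL0 | hLpos
  · refine ⟨0, by simp [← hL0], ?_⟩
    rcases Nat.eq_zero_or_pos (Fintype.card ι) with hc | hc
    · have : IsEmpty ι := Fintype.card_eq_zero_iff.mp hc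
      simp [hc]
    · rw [← hL0]
      simp only [zero_div, zero_pow hc.ne']
      positivity
  · set c : ι → ℝ := fun m => 2 - 4 * t m / L with hc
    obtain ⟨w, hw1, hwge⟩ := circle_bound (fun m => (c m : ℂ))
    set x : ℝ := L/2 * (w.re + 1) with hx
    have hre : |w.re| ≤ 1 := by
      have := Complex.abs_re_le_norm w; rwa [hw1] at this
    have hre1 := abs_le.mp hre
    refine ⟨x, ⟨by nlinarith [hre1.1], by nlinarith [hre1.2]⟩, ?_⟩
    have hconj' : w * (starRingEnd ℂ) w = 1 := by
      rw [Complex.mul_conj, Complex.normSq_eq_norm_sq, hw1]; norm_num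
    have hkey : ∀ m, |x - t m| = (L/4) * ‖w^2 + c m * w + 1‖ := by
      intro m
      have hfact : w^2 + (c m : ℂ) * w + 1 = w * (w + (starRingEnd ℂ) w + c m) := by
        linear_combination -hconj'
      have habs : ‖w^2 + (c m:ℂ) * w + 1‖ = |2 * w.re + c m| := by
        rw [hfact, norm_mul, hw1, one_mul]
        have : w + (starRingEnd ℂ) w + (c m : ℂ) = ((2 * w.re + c m : ℝ) : ℂ) := by
          rw [Complex.add_conj]; push_cast; ring
        rw [this, Complex.norm_real, Real.norm_eq_abs]
      rw [habs]
      rw [← abs_of_pos (show (0:ℝ) < L/4 by linarith), ← abs_mul]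
      congr 1
      field_simp [hc, hx]
      rw [hx, hc]
      field_simp
      ring
    calc (L/4)^(Fintype.card ι) = (L/4)^(Fintype.card ι) * 1 := by ring
      _ ≤ (L/4)^(Fintype.card ι) * ∏ m, ‖w^2 + c m * w + 1‖ := by
          apply mul_le_mul_of_nonneg_left hwge (by positivity)
      _ = ∏ m, ((L/4) * ‖w^2 + c m * w + 1‖) := by
          rw [Finset.prod_mul_distrib]
          simp [Finset.prod_const, Finset.card_univ, div_pow]
      _ = ∏ m, |x - t m| := by
          exact Finset.prod_congr rfl fun m _ => (hkey m).symm

-- Lemma C : diameter bound for preconnected subsets of lemniscates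
lemma diam_bound {ι : Type*} [Fintype ι] (c : ι → ℂ) {S : Set ℂ} (hS : IsPreconnected S)
    {z₀ z₁ : ℂ} (h₀ : z₀ ∈ S) (h₁ : z₁ ∈ S) {B : ℝ}
    (hB : ∀ z ∈ S, ∏ m, ‖z - c m‖ ≤ B) :
    (‖z₀ - z₁‖ / 4) ^ (Fintype.card ι) ≤ B := by
  set D := ‖z₀ - z₁‖ with hD
  have hD0 : 0 ≤ D := norm_nonneg _
  rcases eq_or_lt_of_le hD0 with hDz | hDpos
  · rcases Nat.eq_zero_or_pos (Fintype.card ι) with hc | hc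
    · have := hB z₀ h₀
      have hemp : IsEmpty ι := Fintype.card_eq_zero_iff.mp hc
      simpa [hc] using this
    · rw [← hDz]
      simp only [zero_div, zero_pow hc.ne']
      exact le_trans (Finset.prod_nonneg fun m _ => norm_nonneg _) (hB z₀ h₀)
  · set u := z₁ - z₀ with hu
    set π : ℂ → ℝ := fun z => ((z - z₀) * (starRingEnd ℂ) u).re / D with hπ
    have hπcont : Continuous π := by
      apply Continuous.div_const
      exact Complex.continuous_re.comp ((continuous_id.sub continuous_const).mul continuous_const)
    have hπz₀ : π z₀ = 0 := by simp [hπ]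
    have huabs : ‖u‖ = D := by rw [hu, hD, ← norm_neg]; congr 1; ring
    have hπz₁ : π z₁ = D := by
      have he : (z₁ - z₀) * (starRingEnd ℂ) u = ((D^2 : ℝ) : ℂ) := by
        rw [← hu, Complex.mul_conj]
        norm_cast
        rw [Complex.normSq_eq_norm_sq, huabs]
      simp only [hπ, he, Complex.ofReal_re]
      field_simp
    have hlip : ∀ a b : ℂ, |π a - π b| ≤ ‖a - b‖ := by
      intro a b
      have : π a - π b = ((a - b) * (starRingEnd ℂ) u).re / D := by
        simp only [hπ]
        rw [div_sub_div_same]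
        congr 1
        rw [← Complex.sub_re, ← sub_mul]
        congr 2
        ring
      rw [this, abs_div, abs_of_pos hDpos, div_le_iff₀ hDpos]
      calc |((a - b) * (starRingEnd ℂ) u).re| ≤ ‖(a - b) * (starRingEnd ℂ) u‖ :=
            Complex.abs_re_le_norm _
        _ = ‖a - b‖ * D := by rw [norm_mul, Complex.norm_conj, huabs]
    obtain ⟨x, hxI, hxge⟩ := interval_prod_bound (fun m => π (c m)) hD0
    have hIcc : x ∈ Set.Icc (π z₀) (π z₁) := by rwa [hπz₀, hπz₁]
    obtain ⟨z, hzS, hzx⟩ := hS.intermediate_value h₀ h₁ hπcont.continuousOn hIcc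
    calc (D/4)^(Fintype.card ι) ≤ ∏ m, |x - π (c m)| := hxge
      _ ≤ ∏ m, ‖z - c m‖ := by
          apply Finset.prod_le_prod (fun m _ => abs_nonneg _)
          intro m _
          rw [← hzx]
          exact hlip z (c m)
      _ ≤ B := hB z hzS

-- Lemma D : root magnitude bound
lemma root_bound {n : ℕ} (hn : 0 < n) {p : Polynomial ℂ} (hmon : p.Monic)
    (hdeg : p.natDegree = n) {Γ : ℝ} (hΓ0 : 0 ≤ Γ)
    (hc : ∀ k ∈ Finset.Icc 1 n, ‖p.coeff (n - k)‖ ≤ Γ^k)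
    {z : ℂ} (hz : p.eval z = 0) : ‖z‖ ≤ 2*Γ := by
  by_contra hlt
  push_neg at hlt
  have hzpos : 0 < ‖z‖ := lt_of_le_of_lt (by linarith) hlt
  have heval : p.eval z = ∑ m ∈ Finset.range (n+1), p.coeff m * z^m :=
    eval_eq_sum_range' (by omega) z
  have hcn : p.coeff n = 1 := by rw [← hdeg]; exact hmon.coeff_natDegree
  have hsplit : (0:ℂ) = (∑ m ∈ Finset.range n, p.coeff m * z^m) + z^n := by
    rw [← hz, heval, Finset.sum_range_succ, hcn, one_mul]
  have hzn : ‖z^n‖ ≤ ∑ m ∈ Finset.range n, ‖p.coeff m‖ * (‖z‖)^m := by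
    have : z^n = -(∑ m ∈ Finset.range n, p.coeff m * z^m) := by linear_combination -hsplit
    rw [this, norm_neg]
    calc ‖∑ m ∈ Finset.range n, p.coeff m * z^m‖
        ≤ ∑ m ∈ Finset.range n, ‖p.coeff m * z^m‖ :=
          norm_sum_le _ _
      _ = ∑ m ∈ Finset.range n, ‖p.coeff m‖ * (‖z‖)^m := by
          apply Finset.sum_congr rfl; intro m _; rw [norm_mul, norm_pow]
  have hterm : ∀ m ∈ Finset.range n,
      ‖p.coeff m‖ * (‖z‖)^m ≤ (‖z‖)^n * (1/2)^(n-m) := by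
    intro m hm
    have hmn : m < n := Finset.mem_range.mp hm
    have h1 : ‖p.coeff m‖ ≤ Γ^(n-m) := by
      have := hc (n - m) (by simp [Finset.mem_Icc]; omega)
      rwa [show n - (n - m) = m by omega] at this
    have h2 : Γ^(n-m) ≤ (‖z‖ / 2)^(n-m) :=
      pow_le_pow_left₀ hΓ0 (by linarith) _
    calc ‖p.coeff m‖ * (‖z‖)^m
        ≤ (‖z‖ / 2)^(n-m) * (‖z‖)^m := by
          apply mul_le_mul_of_nonneg_right (le_trans h1 h2) (by positivity)
      _ = (‖z‖)^n * (1/2)^(n-m) := by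
          rw [div_pow, div_pow]
          rw [show (‖z‖)^n = (‖z‖)^(n-m) * (‖z‖)^m by
            rw [← pow_add]; congr 1; omega]
          ring
  have hsum : ∑ m ∈ Finset.range n, (1/2:ℝ)^(n-m) < 1 := by
    have : ∑ m ∈ Finset.range n, (1/2:ℝ)^(n-m) = ∑ k ∈ Finset.range n, (1/2:ℝ)^(k+1) := by
      apply Finset.sum_nbij' (fun m => n - 1 - m) (fun k => n - 1 - k) <;>
        intro a ha <;> simp only [Finset.mem_range] at * <;> try omega
      congr 1; omega
    rw [this]
    have h2 : ∀ N : ℕ, ∑ k ∈ Finset.range N, (1/2:ℝ)^(k+1) = 1 - (1/2)^N := by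
      intro N
      induction N with
      | zero => simp
      | succ N ih => rw [Finset.sum_range_succ, ih]; ring
    rw [h2]
    have : (0:ℝ) < (1/2)^n := by positivity
    linarith
  have : (‖z‖)^n ≤ (‖z‖)^n * ∑ m ∈ Finset.range n, (1/2:ℝ)^(n-m) := by
    calc (‖z‖)^n = ‖z^n‖ := (norm_pow _ _).symm
      _ ≤ ∑ m ∈ Finset.range n, ‖p.coeff m‖ * (‖z‖)^m := hzn
      _ ≤ ∑ m ∈ Finset.range n, (‖z‖)^n * (1/2)^(n-m) :=
          Finset.sum_le_sum hterm
      _ = (‖z‖)^n * ∑ m ∈ Finset.range n, (1/2:ℝ)^(n-m) := by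
          rw [Finset.mul_sum]
  have hpow : 0 < (‖z‖)^n := by positivity
  nlinarith [hsum, hpow]

-- enumeration of a multiset of card n
lemma exists_enum {n : ℕ} {M : Multiset ℂ} (h : Multiset.card M = n) :
    ∃ e : Fin n → ℂ, Finset.univ.val.map e = M := by
  have hl : M.toList.length = n := by rw [Multiset.length_toList]; exact h
  refine ⟨fun i => M.toList.get (Fin.cast hl.symm i), ?_⟩
  rw [Fin.univ_val_map]
  have : List.ofFn (fun i : Fin n => M.toList.get (Fin.cast hl.symm i)) = M.toList := by
    apply List.ext_getElem
    · simp [hl]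
    · intro i h1 h2; simp [List.get]
  rw [this, Multiset.coe_toList]

-- continuity of coefficients of ∏ (X - C (v i))
lemma coeff_prod_cont {n : ℕ} (s : Finset (Fin n)) (m : ℕ) :
    Continuous fun v : Fin n → ℂ => (∏ i ∈ s, (X - C (v i))).coeff m := by
  induction s using Finset.induction generalizing m with
  | empty => simpa using continuous_const
  | @insert a s ha ih =>
    have hrw : ∀ (v : Fin n → ℂ),
        (∏ i ∈ insert a s, (X - C (v i))).coeff m
        = (if m = 0 then 0 else (∏ i ∈ s, (X - C (v i))).coeff (m-1))
          - v a * (∏ i ∈ s, (X - C (v i))).coeff m := by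
      intro v
      rw [Finset.prod_insert ha, sub_mul, coeff_sub, coeff_C_mul]
      congr 1
      cases m with
      | zero => simp [coeff_mul]  -- (X * p).coeff 0 = 0
      | succ m => simp [coeff_X_mul]
    simp only [hrw]
    apply Continuous.sub
    · split
      · exact continuous_const
      · exact ih (m-1)
    · exact (continuous_apply a).mul (ih m)

-- roots continuity along a 1-parameter family
lemma roots_cont {n : ℕ} (p : ℝ → Polynomial ℂ)
    (hmon : ∀ t, (p t).Monic) (hdeg : ∀ t, (p t).natDegree = n)
    (hcont : ∀ m, Continuous fun t => (p t).coeff m)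
    {R : ℝ} (hR0 : 0 ≤ R) (hR : ∀ t, ∀ z ∈ (p t).roots, ‖z‖ ≤ R)
    (t₀ : ℝ) {ε : ℝ} (hε : 0 < ε) :
    ∃ η > 0, ∀ t : ℝ, |t - t₀| < η →
      ∃ e e' : Fin n → ℂ, Finset.univ.val.map e = (p t).roots ∧
        Finset.univ.val.map e' = (p t₀).roots ∧ ∀ i, ‖e i - e' i‖ < ε := by
  by_contra hcon
  push_neg at hcon
  have hcard : ∀ t, Multiset.card (p t).roots = n := by
    intro t
    rw [← hdeg t]
    exact splits_iff_card_roots.mp (IsAlgClosed.splits _)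
  choose ts hts hbad using fun k : ℕ => hcon (1/(k+1) : ℝ) (by positivity)
  have htends : Filter.Tendsto ts Filter.atTop (nhds t₀) := by
    rw [Metric.tendsto_atTop]
    intro δ hδ
    obtain ⟨N, hN⟩ := exists_nat_gt (1/δ)
    refine ⟨N, fun k hk => ?_⟩
    rw [Real.dist_eq]
    refine lt_of_lt_of_le (hts k) ?_
    rw [div_le_iff₀ (by positivity)]
    rw [div_lt_iff₀ hδ] at hN
    have : (N:ℝ) ≤ k := by exact_mod_cast hk
    nlinarith [mul_le_mul_of_nonneg_left this hδ.le]
  -- enumerate roots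
  have henum : ∀ k, ∃ e : Fin n → ℂ, Finset.univ.val.map e = (p (ts k)).roots :=
    fun k => exists_enum (hcard (ts k))
  choose es hes using henum
  -- all roots bounded
  have hmem : ∀ k, es k ∈ Set.pi Set.univ (fun _ : Fin n => Metric.closedBall (0:ℂ) R) := by
    intro k
    intro i _
    simp only [Metric.mem_closedBall, Complex.dist_eq, sub_zero]
    apply hR (ts k)
    rw [← hes k]
    exact Multiset.mem_map_of_mem _ (Finset.mem_univ_val i)
  have hcompact : IsCompact (Set.pi Set.univ (fun _ : Fin n => Metric.closedBall (0:ℂ) R)) :=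
    isCompact_univ_pi (fun _ => isCompact_closedBall _ _)
  obtain ⟨r, -, φ, hφ, hconv⟩ := hcompact.tendsto_subseq hmem
  -- products equal polynomials
  have hprod : ∀ k, (∏ i, (X - C (es k i))) = p (ts k) := by
    intro k
    have h1 : p (ts k) = (Multiset.map (fun a => X - C a) (p (ts k)).roots).prod :=
      (IsAlgClosed.splits _).eq_prod_roots_of_monic (hmon _)
    rw [h1, ← hes k, Multiset.map_map]
    rfl
  have hprod₀ : (∏ i, (X - C (r i))) = p t₀ := by
    apply Polynomial.ext
    intro m
    have h1 : Filter.Tendsto (fun j => (∏ i, (X - C (es (φ j) i))).coeff m)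
        Filter.atTop (nhds ((∏ i, (X - C (r i))).coeff m)) :=
      ((coeff_prod_cont Finset.univ m).tendsto r).comp hconv
    have h2 : Filter.Tendsto (fun j => (p (ts (φ j))).coeff m)
        Filter.atTop (nhds ((p t₀).coeff m)) :=
      ((hcont m).tendsto t₀).comp (htends.comp hφ.tendsto_atTop)
    simp only [hprod] at h1
    exact tendsto_nhds_unique h1 h2
  have hroots₀ : Finset.univ.val.map r = (p t₀).roots := by
    rw [← hprod₀]
    have : (∏ i, (X - C (r i))) = (Multiset.map (fun a => X - C a) (Finset.univ.val.map r)).prod := by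
      rw [Multiset.map_map]; rfl
    rw [this, roots_multiset_prod_X_sub_C]
  -- get close for large j
  have hclose : ∀ᶠ j in Filter.atTop, ∀ i, ‖es (φ j) i - r i‖ < ε := by
    rw [Filter.eventually_all]
    intro i
    have : Filter.Tendsto (fun j => es (φ j) i) Filter.atTop (nhds (r i)) :=
      (tendsto_pi_nhds.mp hconv) i
    have := (Metric.tendsto_nhds.mp this) ε hε
    simpa [Complex.dist_eq] using this
  obtain ⟨j, hj⟩ := hclose.exists
  obtain ⟨i, hi⟩ := hbad (φ j) (es (φ j)) r (hes _) hroots₀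
  exact absurd (hj i) (not_lt.mpr hi)

lemma component_sep {K : Set ℂ} (hK : IsCompact K) {z₀ : ℂ} (hz₀ : z₀ ∈ K)
    {ι : Type*} [Fintype ι] (c : ι → ℂ) (hcK : ∀ m, c m ∈ K) :
    ∃ V : Set ℂ, connectedComponentIn K z₀ ⊆ V ∧ V ⊆ K ∧
      (∀ m, c m ∈ V → c m ∈ connectedComponentIn K z₀) ∧
      ∃ ε > 0, ∀ p ∈ V, ∀ q ∈ K \ V, ε ≤ dist p q := by
  classical
  haveI : CompactSpace K := isCompact_iff_compactSpace.mp hK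
  set x₀ : K := ⟨z₀, hz₀⟩
  have himg : connectedComponentIn K z₀ = Subtype.val '' connectedComponent x₀ :=
    connectedComponentIn_eq_image hz₀
  -- for each center not in the component, a clopen separating it
  have hZ : ∀ m : ι, ∃ Z : Set K, IsClopen Z ∧ x₀ ∈ Z ∧
      (c m ∉ connectedComponentIn K z₀ → (⟨c m, hcK m⟩ : K) ∉ Z) := by
    intro m
    by_cases hm : c m ∈ connectedComponentIn K z₀
    · exact ⟨Set.univ, isClopen_univ, trivial, fun h => absurd hm h⟩
    · have hnot : (⟨c m, hcK m⟩ : K) ∉ connectedComponent x₀ := by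
        intro hmem
        exact hm (by rw [himg]; exact ⟨_, hmem, rfl⟩)
      rw [connectedComponent_eq_iInter_isClopen, Set.mem_iInter] at hnot
      push_neg at hnot
      obtain ⟨⟨Z, hZclopen, hZx⟩, hZm⟩ := hnot
      exact ⟨Z, hZclopen, hZx, fun _ => hZm⟩
  choose Z hZclopen hZx₀ hZex using hZ
  set U : Set K := ⋂ m, Z m with hU
  have hUclopen : IsClopen U := by
    constructor
    · exact isClosed_iInter (fun m => (hZclopen m).isClosed)
    · exact isOpen_iInter_of_finite (fun m => (hZclopen m).isOpen)
  have hcomp_sub : connectedComponent x₀ ⊆ U := by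
    apply Set.subset_iInter
    intro m
    exact (connectedComponent_subset_iInter_isClopen.trans
      (Set.iInter_subset (fun Z : {Z : Set K // IsClopen Z ∧ x₀ ∈ Z} => (Z : Set K)) ⟨Z m, hZclopen m, hZx₀ m⟩))
  refine ⟨Subtype.val '' U, ?_, ?_, ?_, ?_⟩
  · rw [himg]; exact Set.image_mono hcomp_sub
  · exact Subtype.coe_image_subset _ _
  · intro m hm
    by_contra hnot
    obtain ⟨x, hxU, hxv⟩ := hm
    have : x = ⟨c m, hcK m⟩ := Subtype.ext hxv
    rw [this] at hxU
    exact (hZex m hnot) (Set.mem_iInter.mp hxU m)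
  · -- separation
    set A := Subtype.val '' U
    set B := Subtype.val '' (Uᶜ : Set K)
    have hAcomp : IsCompact A :=
      (hUclopen.isClosed.isCompact).image continuous_subtype_val
    have hBcomp : IsCompact B :=
      ((hUclopen.isOpen.isClosed_compl).isCompact).image continuous_subtype_val
    have hKB : K \ A = B := by
      ext z
      constructor
      · rintro ⟨hzK, hzA⟩
        refine ⟨⟨z, hzK⟩, ?_, rfl⟩
        intro hmem
        exact hzA ⟨⟨z, hzK⟩, hmem, rfl⟩
      · rintro ⟨x, hx, rfl⟩
        refine ⟨x.2, ?_⟩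
        rintro ⟨y, hy, hyx⟩
        have : y = x := Subtype.ext hyx
        rw [this] at hy
        exact hx hy
    rw [hKB]
    rcases Set.eq_empty_or_nonempty B with hB | hB
    · exact ⟨1, one_pos, fun p _ q hq => absurd (hB ▸ hq) (Set.notMem_empty q)⟩
    · have hAne : A.Nonempty := ⟨z₀, x₀, Set.mem_iInter.mpr (fun m => hZx₀ m), rfl⟩
      have hdisj : ∀ p ∈ A, ∀ q ∈ B, p ≠ q := by
        rintro p ⟨x, hx, rfl⟩ q ⟨y, hy, rfl⟩ heq
        have : x = y := Subtype.ext heq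
        rw [this] at hx
        exact hy hx
      obtain ⟨⟨p₀, q₀⟩, hpq, hmin⟩ := (hAcomp.prod hBcomp).exists_isMinOn
        (hAne.prod hB) (continuous_dist.continuousOn)
      refine ⟨dist p₀ q₀, ?_, ?_⟩
      · show (0:ℝ) < dist p₀ q₀
        rw [dist_pos]
        exact hdisj p₀ hpq.1 q₀ hpq.2
      · intro p hp q hq
        have := hmin (Set.mk_mem_prod hp hq)
        simpa using this

set_option maxHeartbeats 1000000

/-- Root perturbation bound for monic polynomials: if `f = ∏ (z − α i)` and
`g = ∏ (z − β i)` are monic of degree `n` with coefficients `a_k = f.coeff (n−k)`,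
`b_k = g.coeff (n−k)` (`1 ≤ k ≤ n`), and `Γ = max_k max(|a_k|^{1/k}, |b_k|^{1/k})`,
`γ = 2Γ`, then the roots can be enumerated so that
`max_i |α_i − β_i| ≤ 4·2^{−1/n} (∑_k |a_k − b_k| γ^{n−k})^{1/n}`. -/
theorem roots_continuity (n : ℕ) (hn : 0 < n) (α β : Fin n → ℂ)
    (f g : Polynomial ℂ)
    (hf : f = ∏ i, (Polynomial.X - Polynomial.C (α i)))
    (hg : g = ∏ i, (Polynomial.X - Polynomial.C (β i)))
    (Γ : ℝ)
    (hΓ : Γ = (Finset.Icc 1 n).sup' (Finset.nonempty_Icc.mpr hn) (fun k =>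
      max (‖f.coeff (n - k)‖ ^ ((1 : ℝ) / k))
          (‖g.coeff (n - k)‖ ^ ((1 : ℝ) / k)))) :
    ∃ σ : Equiv.Perm (Fin n), ∀ i,
      ‖α i - β (σ i)‖
        ≤ 4 * (2 : ℝ) ^ (-(1 : ℝ) / n) *
          (∑ k ∈ Finset.Icc 1 n,
            ‖f.coeff (n - k) - g.coeff (n - k)‖ * (2 * Γ) ^ (n - k))
          ^ ((1 : ℝ) / n) := by
  classical
  -- basic monicity facts
  have hfm : f.Monic := hf ▸ monic_prod_of_monic _ _ (fun i _ => monic_X_sub_C _)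
  have hgm : g.Monic := hg ▸ monic_prod_of_monic _ _ (fun i _ => monic_X_sub_C _)
  have hfd : f.natDegree = n := by
    rw [hf, natDegree_prod_of_monic _ _ (fun i _ => monic_X_sub_C _)]
    simp [natDegree_X_sub_C]
  have hgd : g.natDegree = n := by
    rw [hg, natDegree_prod_of_monic _ _ (fun i _ => monic_X_sub_C _)]
    simp [natDegree_X_sub_C]
  -- Γ is nonnegative and bounds coefficients
  have hΓ0 : 0 ≤ Γ := by
    rw [hΓ]
    refine le_trans ?_ (Finset.le_sup' _ (Finset.mem_Icc.mpr ⟨le_refl 1, hn⟩))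
    exact le_trans (Real.rpow_nonneg (norm_nonneg _) _) (le_max_left _ _)
  have hcoeffΓ : ∀ k ∈ Finset.Icc 1 n,
      ‖f.coeff (n-k)‖ ≤ Γ^k ∧ ‖g.coeff (n-k)‖ ≤ Γ^k := by
    intro k hk
    have hk1 : 1 ≤ k := (Finset.mem_Icc.mp hk).1
    have hkR : ((k:ℝ)) ≠ 0 := by positivity
    have key : ∀ x : ℝ, 0 ≤ x → x ^ ((1:ℝ)/k) ≤ Γ → x ≤ Γ^k := by
      intro x hx h1
      calc x = (x ^ ((1:ℝ)/k))^(k:ℕ) := by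
            rw [← Real.rpow_natCast (x ^ ((1:ℝ)/k)) k, ← Real.rpow_mul hx]
            rw [one_div, inv_mul_cancel₀ hkR, Real.rpow_one]
        _ ≤ Γ^k := pow_le_pow_left₀ (Real.rpow_nonneg hx _) h1 k
    have hsup := Finset.le_sup' (f := fun k =>
      max (‖f.coeff (n - k)‖ ^ ((1 : ℝ) / k))
          (‖g.coeff (n - k)‖ ^ ((1 : ℝ) / k))) hk
    rw [← hΓ] at hsup
    exact ⟨key _ (norm_nonneg _) (le_trans (le_max_left _ _) hsup),
           key _ (norm_nonneg _) (le_trans (le_max_right _ _) hsup)⟩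
  set E := ∑ k ∈ Finset.Icc 1 n,
      ‖f.coeff (n - k) - g.coeff (n - k)‖ * (2 * Γ) ^ (n - k) with hE
  have hE0 : 0 ≤ E := by
    apply Finset.sum_nonneg
    intro k _
    have : (0:ℝ) ≤ 2*Γ := by linarith
    positivity
  clear_value E
  -- the homotopy (with clamped parameter)
  set clamp : ℝ → ℝ := fun t => max 0 (min 1 t) with hclamp
  have hclamp_mem : ∀ t, 0 ≤ clamp t ∧ clamp t ≤ 1 := by
    intro t
    constructor
    · exact le_max_left _ _
    · simp [hclamp]
  have hclamp0 : clamp 0 = 0 := by norm_num [hclamp]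
  have hclamp1 : clamp 1 = 1 := by norm_num [hclamp]
  have hclamp_cont : Continuous clamp :=
    continuous_const.max (continuous_const.min continuous_id)
  set h : ℝ → Polynomial ℂ := fun t => f + C ((clamp t : ℝ) : ℂ) * (g - f) with hh
  have hcoeffh : ∀ t m, (h t).coeff m
      = f.coeff m + (clamp t : ℂ) * (g.coeff m - f.coeff m) := by
    intro t m
    simp [hh, coeff_add, coeff_C_mul, coeff_sub]
  have hh0 : h 0 = f := by simp [hh, hclamp0]
  have hh1 : h 1 = g := by simp [hh, hclamp1]
  have hfne : f ≠ 0 := hfm.ne_zero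
  have hdegf : f.degree = ((n:ℕ) : WithBot ℕ) := by rw [degree_eq_natDegree hfm.ne_zero, hfd]
  have hdegg : g.degree = ((n:ℕ) : WithBot ℕ) := by rw [degree_eq_natDegree hgm.ne_zero, hgd]
  have hgf_deg : (g - f).degree < f.degree := by
    by_cases hgf : g = f
    · rw [hgf, sub_self, degree_zero]
      exact bot_lt_iff_ne_bot.mpr (degree_eq_bot.not.mpr hfne)
    · have := degree_sub_lt (hdegg.trans hdegf.symm) hgm.ne_zero
        (by rw [hfm.leadingCoeff, hgm.leadingCoeff])
      rwa [hdegg, ← hdegf] at this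
  have hmonh : ∀ t, (h t).Monic := by
    intro t
    have hCle : degree (C ((clamp t : ℝ) : ℂ) * (g - f)) ≤ degree (g - f) := by
      refine (degree_mul_le _ _).trans ?_
      have := add_le_add_left (degree_C_le (a := ((clamp t : ℝ) : ℂ))) (degree (g-f))
      simpa using this
    exact hfm.add_of_left (lt_of_le_of_lt hCle hgf_deg)
  have hdegh : ∀ t, (h t).natDegree = n := by
    intro t
    have hCle : degree (C ((clamp t : ℝ) : ℂ) * (g - f)) ≤ degree (g - f) := by
      refine (degree_mul_le _ _).trans ?_
      have := add_le_add_left (degree_C_le (a := ((clamp t : ℝ) : ℂ))) (degree (g-f))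
      simpa using this
    have hde := degree_add_eq_left_of_degree_lt (lt_of_le_of_lt hCle hgf_deg)
    rw [hh]
    rw [natDegree_eq_of_degree_eq hde, hfd]
  have hcoefft : ∀ m, Continuous fun t => (h t).coeff m := by
    intro m
    simp only [hcoeffh]
    exact continuous_const.add
      (((Complex.continuous_ofReal).comp hclamp_cont).mul continuous_const)
  -- coefficient bounds for h t
  have hcoeffb : ∀ t, ∀ k ∈ Finset.Icc 1 n, ‖(h t).coeff (n-k)‖ ≤ Γ^k := by
    intro t k hk
    obtain ⟨hfk, hgk⟩ := hcoeffΓ k hk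
    obtain ⟨ht0, ht1⟩ := hclamp_mem t
    have hrw : (h t).coeff (n-k)
        = ((1 - clamp t : ℝ) : ℂ) * f.coeff (n-k) + ((clamp t : ℝ):ℂ) * g.coeff (n-k) := by
      rw [hcoeffh]; push_cast; ring
    rw [hrw]
    calc ‖_‖ ≤ ‖((1 - clamp t : ℝ) : ℂ) * f.coeff (n-k)‖
          + ‖((clamp t : ℝ):ℂ) * g.coeff (n-k)‖ := norm_add_le _ _
      _ = (1 - clamp t) * ‖f.coeff (n-k)‖
          + clamp t * ‖g.coeff (n-k)‖ := by
          simp only [norm_mul, Complex.norm_real, Real.norm_eq_abs]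
          rw [_root_.abs_of_nonneg (show (0:ℝ) ≤ 1 - clamp t by linarith),
            _root_.abs_of_nonneg ht0]
      _ ≤ (1 - clamp t) * Γ^k + clamp t * Γ^k := by
          apply add_le_add
          · exact mul_le_mul_of_nonneg_left hfk (by linarith)
          · exact mul_le_mul_of_nonneg_left hgk ht0
      _ = Γ^k := by ring
  -- roots of h t lie in the disk of radius 2Γ
  have hroot2Γ : ∀ t, ∀ z, (h t).eval z = 0 → ‖z‖ ≤ 2*Γ := by
    intro t z hz
    exact root_bound hn (hmonh t) (hdegh t) hΓ0 (hcoeffb t) hz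
  -- |f - g| ≤ E on the disk
  have hfg_bound : ∀ z : ℂ, ‖z‖ ≤ 2*Γ →
      ‖f.eval z - g.eval z‖ ≤ E := by
    intro z hz
    have habs0 : (0:ℝ) ≤ ‖z‖ := norm_nonneg _
    have hdsub : (f - g).natDegree < n + 1 := by
      have h1 := natDegree_sub_le f g
      rw [hfd, hgd] at h1
      omega
    have heval : (f-g).eval z = ∑ m ∈ Finset.range (n+1), (f-g).coeff m * z^m :=
      eval_eq_sum_range' hdsub z
    have hcoeffn : (f-g).coeff n = 0 := by
      have h1 : f.coeff n = 1 := by rw [← hfd]; exact hfm.coeff_natDegree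
      have h2 : g.coeff n = 1 := by rw [← hgd]; exact hgm.coeff_natDegree
      rw [coeff_sub, h1, h2, sub_self]
    have h1 : ‖(f-g).eval z‖
        ≤ ∑ m ∈ Finset.range (n+1), ‖(f-g).coeff m‖ * (‖z‖)^m := by
      rw [heval]
      refine le_trans (norm_sum_le _ _) ?_
      apply Finset.sum_le_sum
      intro m _
      rw [norm_mul, norm_pow]
    have h2 : ∑ m ∈ Finset.range (n+1), ‖(f-g).coeff m‖ * (‖z‖)^m
        ≤ ∑ m ∈ Finset.range (n+1), ‖(f-g).coeff m‖ * (2*Γ)^m := by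
      apply Finset.sum_le_sum
      intro m _
      exact mul_le_mul_of_nonneg_left (pow_le_pow_left₀ habs0 hz m) (norm_nonneg _)
    have h3 : ∑ m ∈ Finset.range (n+1), ‖(f-g).coeff m‖ * (2*Γ)^m = E := by
      rw [Finset.sum_range_succ, hcoeffn]
      simp only [norm_zero, zero_mul, add_zero]
      rw [hE]
      apply Finset.sum_nbij' (fun m => n - m) (fun k => n - k)
      · intro m hm; simp only [Finset.mem_range] at hm; simp [Finset.mem_Icc]; omega
      · intro k hk; simp only [Finset.mem_Icc] at hk; simp [Finset.mem_range]; omega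
      · intro m hm; simp only [Finset.mem_range] at hm; omega
      · intro k hk; simp only [Finset.mem_Icc] at hk; omega
      · intro m hm
        simp only [Finset.mem_range] at hm
        have hmm : n - (n - m) = m := by omega
        rw [coeff_sub, hmm]
    calc ‖f.eval z - g.eval z‖ = ‖(f-g).eval z‖ := by rw [eval_sub]
      _ ≤ _ := h1
      _ ≤ _ := h2
      _ = E := h3
  -- the lemniscate K
  set Pf : ℂ → ℝ := fun z => ∏ m : Fin n ⊕ Fin n, ‖z - Sum.elim α β m‖ with hPf
  have hPfeq : ∀ z, Pf z = ‖f.eval z‖ * ‖g.eval z‖ := by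
    intro z
    simp only [hPf]
    rw [Fintype.prod_sum_type]
    simp only [Sum.elim_inl, Sum.elim_inr]
    rw [hf, hg, eval_prod, eval_prod, norm_prod, norm_prod]
    simp [eval_sub, eval_X, eval_C]
  set K : Set ℂ := {z | Pf z ≤ (E/2)^2} with hK
  have hrootsK : ∀ t, ∀ z, (h t).eval z = 0 → z ∈ K := by
    intro t z hz
    have hzdisk := hroot2Γ t z hz
    have hfg := hfg_bound z hzdisk
    obtain ⟨ht0, ht1⟩ := hclamp_mem t
    have heval0 : f.eval z + (clamp t : ℂ) * (g.eval z - f.eval z) = 0 := by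
      have : (h t).eval z = f.eval z + (clamp t : ℂ) * (g.eval z - f.eval z) := by
        simp [hh, eval_add, eval_mul, eval_C, eval_sub]
      rw [← this]; exact hz
    have hfz : f.eval z = (clamp t : ℂ) * (f.eval z - g.eval z) := by
      linear_combination heval0
    have hgz : g.eval z = ((clamp t : ℂ) - 1) * (f.eval z - g.eval z) := by
      linear_combination heval0
    show Pf z ≤ (E/2)^2
    have habs1 : ‖(clamp t : ℂ)‖ = clamp t := by
      rw [Complex.norm_real, Real.norm_eq_abs, _root_.abs_of_nonneg ht0]
    have habs2 : ‖(clamp t : ℂ) - 1‖ = 1 - clamp t := by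
      rw [show ((clamp t : ℝ):ℂ) - 1 = (((clamp t - 1 : ℝ)):ℂ) by push_cast; ring]
      rw [Complex.norm_real, Real.norm_eq_abs, abs_of_nonpos (by linarith : clamp t - 1 ≤ 0)]
      ring
    have h1 : ‖f.eval z‖ = clamp t * ‖f.eval z - g.eval z‖ := by
      conv_lhs => rw [hfz]
      rw [norm_mul, habs1]
    have h2 : ‖g.eval z‖ = (1 - clamp t) * ‖f.eval z - g.eval z‖ := by
      conv_lhs => rw [hgz]
      rw [norm_mul, habs2]
    rw [hPfeq, h1, h2]
    have hW0 : 0 ≤ ‖f.eval z - g.eval z‖ := norm_nonneg _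
    nlinarith [mul_le_mul hfg hfg hW0 hE0, sq_nonneg (1 - 2*clamp t),
      mul_nonneg ht0 (by linarith : (0:ℝ) ≤ 1 - clamp t),
      mul_nonneg (mul_nonneg ht0 (by linarith : (0:ℝ) ≤ 1 - clamp t)) (mul_nonneg hW0 hW0)]
  have hαroot : ∀ i, f.eval (α i) = 0 := by
    intro i
    rw [hf, eval_prod]
    apply Finset.prod_eq_zero (Finset.mem_univ i)
    simp
  have hβroot : ∀ j, g.eval (β j) = 0 := by
    intro j
    rw [hg, eval_prod]
    apply Finset.prod_eq_zero (Finset.mem_univ j)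
    simp
  have hαK : ∀ i, α i ∈ K := by
    intro i
    have : (h 0).eval (α i) = 0 := by rw [hh0]; exact hαroot i
    exact hrootsK 0 _ this
  have hβK : ∀ j, β j ∈ K := by
    intro j
    have : (h 1).eval (β j) = 0 := by rw [hh1]; exact hβroot j
    exact hrootsK 1 _ this
  have hcenter2Γ : ∀ m : Fin n ⊕ Fin n, ‖Sum.elim α β m‖ ≤ 2*Γ := by
    rintro (i | j)
    · exact hroot2Γ 0 _ (by rw [hh0]; exact hαroot i)
    · exact hroot2Γ 1 _ (by rw [hh1]; exact hβroot j)
  -- K is compact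
  have hKclosed : IsClosed K := by
    apply isClosed_le _ continuous_const
    apply continuous_finset_prod
    intro m _
    exact continuous_norm.comp (continuous_id.sub continuous_const)
  have hKsub : K ⊆ Metric.closedBall 0 (2*Γ + (E/2)^2 + 1) := by
    intro z hzK
    rw [Metric.mem_closedBall, Complex.dist_eq, sub_zero]
    by_contra hfar
    push_neg at hfar
    have hr1 : 1 ≤ (E/2)^2 + 1 := by nlinarith [sq_nonneg (E/2)]
    have hfac : ∀ m : Fin n ⊕ Fin n, (E/2)^2 + 1 ≤ ‖z - Sum.elim α β m‖ := by
      intro m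
      have h1 := hcenter2Γ m
      have h2 : ‖z‖ - ‖Sum.elim α β m‖ ≤ ‖z - Sum.elim α β m‖ := by
        have := norm_sub_norm_le z (Sum.elim α β m)
        simpa using this
      linarith
    have hcard : 0 < Fintype.card (Fin n ⊕ Fin n) := by
      simp only [Fintype.card_sum, Fintype.card_fin]
      omega
    have hple : ((E/2)^2 + 1) ^ (Fintype.card (Fin n ⊕ Fin n)) ≤ Pf z := by
      simp only [hPf, ← Finset.card_univ, ← Finset.prod_const]
      apply Finset.prod_le_prod (fun m _ => by positivity) (fun m _ => hfac m)
    have h6 : (E/2)^2 + 1 ≤ ((E/2)^2 + 1) ^ (Fintype.card (Fin n ⊕ Fin n)) :=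
      le_self_pow₀ hr1 hcard.ne'
    have h7 : Pf z ≤ (E/2)^2 := hzK
    linarith
  have hKcompact : IsCompact K :=
    IsCompact.of_isClosed_subset (isCompact_closedBall _ _) hKclosed hKsub
  have hrootsK' : ∀ t : ℝ, ∀ z ∈ (h t).roots, z ∈ K := by
    intro t z hz
    exact hrootsK t z (Polynomial.mem_roots'.mp hz).2
  have hroots2Γ' : ∀ t : ℝ, ∀ z ∈ (h t).roots, ‖z‖ ≤ 2*Γ := by
    intro t z hz
    exact hroot2Γ t z (Polynomial.mem_roots'.mp hz).2
  have hroots0 : (h 0).roots = Finset.univ.val.map α := by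
    rw [hh0, hf]
    have : ∏ i, (X - C (α i)) = (Multiset.map (fun a => X - C a) (Finset.univ.val.map α)).prod := by
      rw [Multiset.map_map]; rfl
    rw [this, roots_multiset_prod_X_sub_C]
  have hroots1 : (h 1).roots = Finset.univ.val.map β := by
    rw [hh1, hg]
    have : ∏ i, (X - C (β i)) = (Multiset.map (fun a => X - C a) (Finset.univ.val.map β)).prod := by
      rw [Multiset.map_map]; rfl
    rw [this, roots_multiset_prod_X_sub_C]
  have hcK : ∀ m : Fin n ⊕ Fin n, Sum.elim α β m ∈ K := by
    rintro (i | j)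
    · exact hαK i
    · exact hβK j
  -- per-component count equality
  have hcount : ∀ z₀ ∈ K,
      Multiset.card (Multiset.filter (fun i : Fin n => α i ∈ connectedComponentIn K z₀)
        Finset.univ.val)
      = Multiset.card (Multiset.filter (fun j : Fin n => β j ∈ connectedComponentIn K z₀)
        Finset.univ.val) := by
    intro z₀ hz₀
    obtain ⟨V, hV1, hV2, hV3, ε, hε, hsep⟩ := component_sep hKcompact hz₀ (Sum.elim α β) hcK
    set cnt : ℝ → ℕ := fun t => Multiset.card (Multiset.filter (· ∈ V) (h t).roots) with hcnt
    have hloc : ∀ t₀ : ℝ, ∃ η > 0, ∀ t, |t - t₀| < η → cnt t = cnt t₀ := by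
      intro t₀
      obtain ⟨η, hη, hm⟩ := roots_cont h hmonh hdegh hcoefft
        (show (0:ℝ) ≤ 2*Γ by linarith) hroots2Γ' t₀ hε
      refine ⟨η, hη, fun t ht => ?_⟩
      obtain ⟨e, e', he, he', hcl⟩ := hm t ht
      have hkey : ∀ i, (e i ∈ V ↔ e' i ∈ V) := by
        intro i
        have heK : e i ∈ K := hrootsK' t _
          (by rw [← he]; exact Multiset.mem_map_of_mem e (Finset.mem_univ_val i))
        have heK' : e' i ∈ K := hrootsK' t₀ _
          (by rw [← he']; exact Multiset.mem_map_of_mem e' (Finset.mem_univ_val i))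
        constructor
        · intro hi
          by_contra hno
          have := hsep (e i) hi (e' i) ⟨heK', hno⟩
          rw [Complex.dist_eq] at this
          have hcli := hcl i
          linarith
        · intro hi
          by_contra hno
          have := hsep (e' i) hi (e i) ⟨heK, hno⟩
          rw [Complex.dist_eq] at this
          have hcli := hcl i
          rw [← norm_neg] at hcli
          simp only [neg_sub] at hcli
          linarith
      have hc1 : cnt t = Multiset.card (Multiset.filter (fun i => e i ∈ V) Finset.univ.val) := by
        rw [hcnt]
        simp only
        rw [← he, Multiset.filter_map, Multiset.card_map]
        rfl
      have hc2 : cnt t₀ = Multiset.card (Multiset.filter (fun i => e' i ∈ V) Finset.univ.val) := by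
        rw [hcnt]
        simp only
        rw [← he', Multiset.filter_map, Multiset.card_map]
        rfl
      rw [hc1, hc2]
      congr 1
      exact Multiset.filter_congr (fun i _ => hkey i)
    have hS : IsClopen {t : ℝ | cnt t = cnt 0} := by
      constructor
      · rw [← isOpen_compl_iff]
        rw [Metric.isOpen_iff]
        intro t ht
        obtain ⟨η, hη, hloct⟩ := hloc t
        refine ⟨η, hη, fun t' ht' => ?_⟩
        rw [Metric.mem_ball, Real.dist_eq] at ht'
        have := hloct t' ht'
        simp only [Set.mem_compl_iff, Set.mem_setOf_eq] at ht ⊢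
        rw [this]; exact ht
      · rw [Metric.isOpen_iff]
        intro t ht
        obtain ⟨η, hη, hloct⟩ := hloc t
        refine ⟨η, hη, fun t' ht' => ?_⟩
        rw [Metric.mem_ball, Real.dist_eq] at ht'
        have := hloct t' ht'
        simp only [Set.mem_setOf_eq] at ht ⊢
        rw [this]; exact ht
    have hSuniv : {t : ℝ | cnt t = cnt 0} = Set.univ := by
      rcases isClopen_iff.mp hS with hemp | huniv
      · exfalso
        have : (0:ℝ) ∈ {t : ℝ | cnt t = cnt 0} := rfl
        rw [hemp] at this
        exact this
      · exact huniv
    have hcnt01 : cnt 1 = cnt 0 := by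
      have : (1:ℝ) ∈ {t : ℝ | cnt t = cnt 0} := by rw [hSuniv]; trivial
      exact this
    -- identify the counts
    have hα_in : ∀ i : Fin n, (α i ∈ V ↔ α i ∈ connectedComponentIn K z₀) := by
      intro i
      exact ⟨fun hi => hV3 (Sum.inl i) hi, fun hi => hV1 hi⟩
    have hβ_in : ∀ j : Fin n, (β j ∈ V ↔ β j ∈ connectedComponentIn K z₀) := by
      intro j
      exact ⟨fun hj => hV3 (Sum.inr j) hj, fun hj => hV1 hj⟩
    have hc0 : cnt 0 = Multiset.card (Multiset.filter
        (fun i : Fin n => α i ∈ connectedComponentIn K z₀) Finset.univ.val) := by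
      rw [hcnt]
      simp only
      rw [hroots0, Multiset.filter_map, Multiset.card_map]
      congr 1
      exact Multiset.filter_congr (fun i _ => hα_in i)
    have hc1 : cnt 1 = Multiset.card (Multiset.filter
        (fun j : Fin n => β j ∈ connectedComponentIn K z₀) Finset.univ.val) := by
      rw [hcnt]
      simp only
      rw [hroots1, Multiset.filter_map, Multiset.card_map]
      congr 1
      exact Multiset.filter_congr (fun j _ => hβ_in j)
    rw [← hc0, ← hc1, hcnt01]
  -- build the permutation
  set u : Fin n → Set ℂ := fun i => connectedComponentIn K (α i) with hu
  set v : Fin n → Set ℂ := fun j => connectedComponentIn K (β j) with hv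
  have hbridge : ∀ (p : Fin n → Prop) (hp : DecidablePred p),
      (Finset.filter p Finset.univ).card = Multiset.card (Multiset.filter p Finset.univ.val) := by
    intro p hp
    rw [Finset.card_def, Finset.filter_val]
  have hcount' : ∀ z₁ ∈ K,
      (Finset.filter (fun i => α i ∈ connectedComponentIn K z₁) Finset.univ).card
      = (Finset.filter (fun j => β j ∈ connectedComponentIn K z₁) Finset.univ).card := by
    intro z₁ hz₁
    rw [hbridge _ _, hbridge _ _]
    exact hcount z₁ hz₁
  have hfib : ∀ S : Set ℂ, Fintype.card {i // u i = S} = Fintype.card {j // v j = S} := by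
    intro S
    have hucomp : ∀ i, α i ∈ S → u i = S → True := fun _ _ _ => trivial
    by_cases hA : ∃ i₀, u i₀ = S
    · obtain ⟨i₀, hi₀⟩ := hA
      have hSK : S = connectedComponentIn K (α i₀) := by rw [← hi₀, hu]
      have hu_iff : ∀ i, (u i = S ↔ α i ∈ S) := by
        intro i
        constructor
        · intro hui
          rw [← hui, hu]
          exact mem_connectedComponentIn (hαK i)
        · intro hαi
          rw [hSK] at hαi ⊢
          rw [hu]
          exact (connectedComponentIn_eq hαi).symm
      have hv_iff : ∀ j, (v j = S ↔ β j ∈ S) := by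
        intro j
        constructor
        · intro hvj
          rw [← hvj, hv]
          exact mem_connectedComponentIn (hβK j)
        · intro hβj
          rw [hSK] at hβj ⊢
          rw [hv]
          exact (connectedComponentIn_eq hβj).symm
      rw [Fintype.card_subtype, Fintype.card_subtype]
      have h1 : Finset.filter (fun i => u i = S) Finset.univ
          = Finset.filter (fun i => α i ∈ S) Finset.univ :=
        Finset.filter_congr (fun i _ => by rw [hu_iff i])
      have h2 : Finset.filter (fun j => v j = S) Finset.univ
          = Finset.filter (fun j => β j ∈ S) Finset.univ :=
        Finset.filter_congr (fun j _ => by rw [hv_iff j])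
      rw [h1, h2, hSK]
      exact hcount' (α i₀) (hαK i₀)
    · by_cases hB : ∃ j₀, v j₀ = S
      · obtain ⟨j₀, hj₀⟩ := hB
        have hSK : S = connectedComponentIn K (β j₀) := by rw [← hj₀, hv]
        have hu_iff : ∀ i, (u i = S ↔ α i ∈ S) := by
          intro i
          constructor
          · intro hui
            rw [← hui, hu]
            exact mem_connectedComponentIn (hαK i)
          · intro hαi
            rw [hSK] at hαi ⊢
            rw [hu]
            exact (connectedComponentIn_eq hαi).symm
        have hv_iff : ∀ j, (v j = S ↔ β j ∈ S) := by
          intro j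
          constructor
          · intro hvj
            rw [← hvj, hv]
            exact mem_connectedComponentIn (hβK j)
          · intro hβj
            rw [hSK] at hβj ⊢
            rw [hv]
            exact (connectedComponentIn_eq hβj).symm
        rw [Fintype.card_subtype, Fintype.card_subtype]
        have h1 : Finset.filter (fun i => u i = S) Finset.univ
            = Finset.filter (fun i => α i ∈ S) Finset.univ :=
          Finset.filter_congr (fun i _ => by rw [hu_iff i])
        have h2 : Finset.filter (fun j => v j = S) Finset.univ
            = Finset.filter (fun j => β j ∈ S) Finset.univ :=
          Finset.filter_congr (fun j _ => by rw [hv_iff j])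
        rw [h1, h2, hSK]
        exact hcount' (β j₀) (hβK j₀)
      · push_neg at hA hB
        rw [Fintype.card_subtype, Fintype.card_subtype]
        rw [Finset.filter_false_of_mem (fun i _ => hA i),
          Finset.filter_false_of_mem (fun j _ => hB j)]
  set σ : Equiv.Perm (Fin n) :=
    Equiv.ofFiberEquiv (f := u) (g := v) (fun S => Fintype.equivOfCardEq (hfib S)) with hσ
  refine ⟨σ, fun i => ?_⟩
  have hvu : v (σ i) = u i := Equiv.ofFiberEquiv_map _ i
  have hβin : β (σ i) ∈ u i := by
    rw [← hvu, hv]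
    exact mem_connectedComponentIn (hβK (σ i))
  have hαin : α i ∈ u i := mem_connectedComponentIn (hαK i)
  have hpre : IsPreconnected (u i) := by rw [hu]; exact isPreconnected_connectedComponentIn
  have hsubK : u i ⊆ K := by rw [hu]; exact connectedComponentIn_subset _ _
  have hdb := diam_bound (Sum.elim α β) hpre hαin hβin
    (B := (E/2)^2) (fun z hz => hsubK hz)
  rw [Fintype.card_sum, Fintype.card_fin] at hdb
  have hd0 : (0:ℝ) ≤ ‖α i - β (σ i)‖ := norm_nonneg _
  have hn0 : ((n:ℝ)) ≠ 0 := by positivity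
  have hstep1 : (‖α i - β (σ i)‖/4)^n ≤ E/2 := by
    by_contra hcon
    push_neg at hcon
    have h1 : ((E/2))^2 < ((‖α i - β (σ i)‖/4)^n)^2 := by
      apply pow_lt_pow_left₀ hcon (by positivity)
      norm_num
    rw [← pow_mul] at h1
    rw [show n * 2 = n + n by ring] at h1
    linarith
  have hstep2 : ‖α i - β (σ i)‖/4 ≤ (E/2) ^ ((1:ℝ)/n) := by
    have hrp := Real.rpow_le_rpow (by positivity) hstep1
      (by positivity : (0:ℝ) ≤ 1/(n:ℝ))
    rwa [← Real.rpow_natCast (‖α i - β (σ i)‖/4) n,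
      ← Real.rpow_mul (by positivity), mul_one_div, div_self hn0, Real.rpow_one] at hrp
  have hrhs : (E/2) ^ ((1:ℝ)/n) = (2:ℝ)^(-(1:ℝ)/n) * E ^ ((1:ℝ)/n) := by
    rw [Real.div_rpow hE0 (by norm_num : (0:ℝ) ≤ 2)]
    rw [neg_div, Real.rpow_neg (by norm_num : (0:ℝ) ≤ 2)]
    rw [div_eq_mul_inv, mul_comm]
  calc ‖α i - β (σ i)‖ = 4 * (‖α i - β (σ i)‖/4) := by ring
    _ ≤ 4 * ((E/2) ^ ((1:ℝ)/n)) := by linarith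
    _ = 4 * (2:ℝ)^(-(1:ℝ)/n) * E ^ ((1:ℝ)/n) := by rw [hrhs]; ring
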